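/- Let n ≥ 1, ν > 0, T > 0, and let bⱼ : [0,T]×ℝⁿ → ℝ (1 ≤ j ≤ n) and c_{ij} : [0,T]×ℝⁿ → ℝ (1 ≤ i,j ≤ n) be bounded continuous functions. Suppose w = (w₁,…,wₙ) : [0,T]×ℝⁿ → ℝⁿ is bounded and continuous, each wᵢ has a time derivative for t ∈ (0,T) and continuous bounded first and second spatial derivatives, and w satisfies the linear parabolic system ∂wᵢ/∂t − ν Σ_{j=1}^n ∂²wᵢ/∂xⱼ² + Σ_{j=1}^n bⱼ ∂wᵢ/∂xⱼ + Σ_{j=1}^n c_{ij} wⱼ = 0 for all 1 ≤ i ≤ n, together with the zero initial condition w(0,·) = 0. Then w ≡ 0 on [0,T]×ℝⁿ. -/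

import Mathlib

open Set

noncomputable section

abbrev E (n : ℕ) := EuclideanSpace ℝ (Fin n)

/-- Partial derivative of `f` in the `j`-th coordinate direction. -/
noncomputable def pd {n : ℕ} (f : E n → ℝ) (j : Fin n) (x : E n) : ℝ :=
  fderiv ℝ f x (EuclideanSpace.single j 1)

open Filter Topology

namespace Par

variable {n : ℕ}

/-- squared norm as a finite sum -/
def qq {n : ℕ} (x : E n) : ℝ := ∑ j, x j ^ 2

lemma qq_nonneg (x : E n) : 0 ≤ qq x :=
  Finset.sum_nonneg fun j _ => sq_nonneg _

lemma qq_eq (x : E n) : qq x = ‖x‖ ^ 2 := by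
  rw [EuclideanSpace.norm_eq, Real.sq_sqrt]
  · simp [qq]
  · exact Finset.sum_nonneg fun j _ => by positivity

lemma sq_coord_le (x : E n) (j : Fin n) : x j ^ 2 ≤ qq x :=
  Finset.single_le_sum (f := fun j => x j ^ 2) (fun i _ => sq_nonneg _) (Finset.mem_univ j)

lemma abs_coord_le (x : E n) (j : Fin n) : |x j| ≤ (1 + qq x) / 2 := by
  have h1 := sq_coord_le x j
  nlinarith [sq_nonneg (|x j| - 1), sq_abs (x j)]

lemma continuous_qq : Continuous (qq (n := n)) := by
  refine continuous_finset_sum _ fun j _ => ?_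
  exact ((EuclideanSpace.proj (𝕜 := ℝ) j).continuous).pow 2

lemma hasFDerivAt_qq (x : E n) :
    HasFDerivAt qq (∑ j, (2 * x j) • (EuclideanSpace.proj (𝕜 := ℝ) j)) x := by
  refine HasFDerivAt.fun_sum fun j _ => ?_
  have h := (EuclideanSpace.proj (𝕜 := ℝ) j).hasFDerivAt (x := x)
  have := h.mul h
  convert this using 1
  · ext y; simp [pow_two]
  · ext y; simp [two_mul]; ring
  · rw [two_mul, add_smul]; rfl

lemma differentiable_qq : Differentiable ℝ (qq (n := n)) :=
  fun x => (hasFDerivAt_qq x).differentiableAt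

lemma pd_qq (j : Fin n) (x : E n) : pd qq j x = 2 * x j := by
  rw [pd, (hasFDerivAt_qq x).fderiv]
  simp [EuclideanSpace.single_apply, Finset.sum_ite_eq]

lemma pd_sub {f g : E n → ℝ} {j : Fin n} {x : E n}
    (hf : DifferentiableAt ℝ f x) (hg : DifferentiableAt ℝ g x) :
    pd (fun y => f y - g y) j x = pd f j x - pd g j x := by
  simp [pd, fderiv_fun_sub hf hg]

lemma pd_neg {f : E n → ℝ} {j : Fin n} {x : E n} :
    pd (fun y => -f y) j x = -pd f j x := by
  simp [pd, fderiv_neg]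

lemma pd_const {c : ℝ} {j : Fin n} {x : E n} : pd (fun _ : E n => c) j x = 0 := by
  simp [pd]

lemma pd_const_add {f : E n → ℝ} {j : Fin n} {x : E n} (c : ℝ) :
    pd (fun y => c + f y) j x = pd f j x := by
  simp [pd, fderiv_const_add]

lemma pd_const_mul {f : E n → ℝ} {j : Fin n} {x : E n} (c : ℝ)
    (hf : DifferentiableAt ℝ f x) :
    pd (fun y => c * f y) j x = c * pd f j x := by
  simp [pd, fderiv_const_mul hf c]

end Par


/-- If `f` is differentiable at `t₀` and `f s ≤ f t₀` on `[a, t₀]` with `a < t₀`,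
then `deriv f t₀ ≥ 0`. -/
lemma deriv_nonneg_of_left_max {f : ℝ → ℝ} {a t₀ : ℝ} (h : a < t₀)
    (hd : DifferentiableAt ℝ f t₀) (hm : ∀ s ∈ Icc a t₀, f s ≤ f t₀) :
    0 ≤ deriv f t₀ := by
  have hs := hasDerivAt_iff_tendsto_slope.1 hd.hasDerivAt
  have h2 : Tendsto (slope f t₀) (𝓝[<] t₀) (𝓝 (deriv f t₀)) :=
    hs.mono_left (nhdsWithin_mono _ fun s hs => ne_of_lt hs)
  refine ge_of_tendsto h2 ?_
  filter_upwards [Ioo_mem_nhdsLT_of_mem (show t₀ ∈ Ioc a t₀ from ⟨h, le_refl _⟩)] with s hs'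
  rw [slope_def_field]
  have h5 := hm s ⟨hs'.1.le, hs'.2.le⟩
  have h6 : s - t₀ < 0 := by linarith [hs'.2]
  rw [div_nonneg_iff]
  right; constructor <;> linarith

/-- Second derivative test: local max at 0 implies second derivative nonpositive. -/
lemma second_deriv_nonpos {g g' : ℝ → ℝ} {δ : ℝ} (hδ : 0 < δ)
    (hg : ∀ s, HasDerivAt g (g' s) s) (hm : ∀ s ∈ Ioo (-δ) δ, g s ≤ g 0)
    (h2 : DifferentiableAt ℝ g' 0) : g' 0 = 0 ∧ deriv g' 0 ≤ 0 := by
  have hmem : Ioo (-δ) δ ∈ 𝓝 (0 : ℝ) := Ioo_mem_nhds (by linarith) hδ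
  have hloc : IsLocalMax g 0 := by
    filter_upwards [hmem] with s hs using hm s hs
  have hg0 : g' 0 = 0 := by
    have := hloc.deriv_eq_zero
    rwa [(hg 0).deriv] at this
  refine ⟨hg0, ?_⟩
  by_contra hpos
  push_neg at hpos
  have hslope := hasDerivAt_iff_tendsto_slope.1 h2.hasDerivAt
  have h3 : Tendsto (slope g' 0) (𝓝[>] 0) (𝓝 (deriv g' 0)) :=
    hslope.mono_left (nhdsWithin_mono _ fun s hs => ne_of_gt hs)
  have h4 : ∀ᶠ s in 𝓝[>] (0:ℝ), 0 < slope g' 0 s := h3.eventually (eventually_gt_nhds hpos)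
  obtain ⟨ε, hε, hsub⟩ := mem_nhdsGT_iff_exists_Ioo_subset.1 h4
  have hg'pos : ∀ s ∈ Ioo (0:ℝ) ε, 0 < g' s := by
    intro s hs
    have := hsub hs
    simp only [mem_setOf_eq, slope_def_field, hg0, sub_zero] at this
    have := mul_pos this hs.1
    rwa [div_mul_cancel₀] at this
    exact ne_of_gt hs.1
  set r := min ε δ / 2 with hr
  have hmin : 0 < min ε δ := lt_min (mem_Ioi.1 hε) hδ
  have hrpos : 0 < r := by rw [hr]; linarith
  have hrε : r < ε := by
    have := min_le_left ε δ; rw [hr]; linarith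
  have hrδ : r < δ := by
    have := min_le_right ε δ; rw [hr]; linarith
  have hmono : StrictMonoOn g (Icc 0 r) := by
    refine strictMonoOn_of_deriv_pos (convex_Icc 0 r)
      (fun s _ => (hg s).continuousAt.continuousWithinAt) (fun s hs => ?_)
    rw [interior_Icc] at hs
    rw [(hg s).deriv]
    exact hg'pos s ⟨hs.1, hs.2.trans hrε⟩
  have := hmono (left_mem_Icc.2 hrpos.le) (right_mem_Icc.2 hrpos.le) hrpos
  have := hm r ⟨by linarith, hrδ⟩
  linarith

set_option maxHeartbeats 1000000 in
lemma comparison {n : ℕ} (ν T : ℝ) (hν : 0 < ν) (hT : 0 < T)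
    (b : Fin n → ℝ → E n → ℝ) (Mb : ℝ) (hMb : 0 ≤ Mb)
    (hb : ∀ j, ∀ t ∈ Icc (0:ℝ) T, ∀ x, |b j t x| ≤ Mb)
    (u : ℝ → E n → ℝ) (Mu : ℝ)
    (hub : ∀ t ∈ Icc (0:ℝ) T, ∀ x, u t x ≤ Mu)
    (huc : ContinuousOn (fun p : ℝ × E n => u p.1 p.2) (Icc (0:ℝ) T ×ˢ univ))
    (hut : ∀ x, ∀ t ∈ Ioo (0:ℝ) T, DifferentiableAt ℝ (fun s => u s x) t)
    (hux : ∀ t ∈ Icc (0:ℝ) T, Differentiable ℝ (u t) ∧ ∀ j, Differentiable ℝ (pd (u t) j))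
    (G F : ℝ → ℝ) (hG0 : G 0 = 0) (hGd : ∀ t, HasDerivAt G (F t) t)
    (hF : ∀ x, ∀ t ∈ Ioo (0:ℝ) T,
      deriv (fun s => u s x) t - ν * ∑ j, pd (pd (u t) j) j x
        + ∑ j, b j t x * pd (u t) j x ≤ F t)
    (hinit : ∀ x, u 0 x ≤ 0) :
    ∀ t ∈ Icc (0:ℝ) T, ∀ x, u t x ≤ G t := by
  set lam : ℝ := Mb * n + 2 * ν * n + 1 with hlam
  have hn0 : (0:ℝ) ≤ n := Nat.cast_nonneg n
  have hlampos : 0 < lam := by positivity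
  have hGc : Continuous G := by
    rw [continuous_iff_continuousAt]; exact fun t => (hGd t).continuousAt
  obtain ⟨MG, hMG⟩ : ∃ MG : ℝ, ∀ t ∈ Icc (0:ℝ) T, |G t| ≤ MG := by
    obtain ⟨C, hC⟩ := isCompact_Icc.exists_bound_of_continuousOn
      (hGc.continuousOn : ContinuousOn G (Icc (0:ℝ) T))
    exact ⟨C, fun t ht => by simpa using hC t ht⟩
  have key : ∀ ε > (0:ℝ), ∀ T', 0 < T' → T' < T → ∀ t₁ ∈ Icc (0:ℝ) T', ∀ x₁ : E n,
      u t₁ x₁ - G t₁ ≤ ε * Real.exp (lam * t₁) * (1 + Par.qq x₁) := by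
    intro ε hε T' hT'0 hT'T t₁ ht₁ x₁
    by_contra hcon
    push_neg at hcon
    have hψc : ContinuousOn
        (fun p : ℝ × E n => u p.1 p.2 - G p.1 - ε * Real.exp (lam * p.1) * (1 + Par.qq p.2))
        (Icc (0:ℝ) T ×ˢ univ) := by
      apply ContinuousOn.sub
      · exact huc.sub (hGc.comp continuous_fst).continuousOn
      · exact (((continuous_const.mul (Real.continuous_exp.comp
          (continuous_const.mul continuous_fst))).mul
          (continuous_const.add (Par.continuous_qq.comp continuous_snd)))).continuousOn
    set s0 : ℝ := Real.sqrt (max 1 ((Mu + MG) / ε)) with hs0def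
    have hs0 : 0 ≤ s0 := Real.sqrt_nonneg _
    have hs0sq : s0 ^ 2 = max 1 ((Mu + MG) / ε) :=
      Real.sq_sqrt (le_trans zero_le_one (le_max_left _ _))
    set R : ℝ := max s0 ‖x₁‖ + 1 with hRdef
    have hs0R : s0 < R := by
      have := le_max_left s0 ‖x₁‖; rw [hRdef]; linarith
    have hx₁R : ‖x₁‖ < R := by
      have := le_max_right s0 ‖x₁‖; rw [hRdef]; linarith
    have hR0 : 0 < R := lt_of_le_of_lt hs0 hs0R
    have hMuMG : Mu + MG ≤ ε * s0 ^ 2 := by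
      rw [hs0sq]
      calc Mu + MG = ε * ((Mu + MG) / ε) := by field_simp
        _ ≤ ε * max 1 ((Mu + MG) / ε) := by
            exact mul_le_mul_of_nonneg_left (le_max_right _ _) hε.le
    have hs0R2 : ε * s0 ^ 2 < ε * R ^ 2 := by
      have h2 : s0 ^ 2 < R ^ 2 := by nlinarith
      exact mul_lt_mul_of_pos_left h2 hε
    clear_value s0
    clear hs0def hs0sq hs0
    set K : Set (ℝ × E n) := Icc (0:ℝ) T' ×ˢ Metric.closedBall (0 : E n) R with hK
    have hKc : IsCompact K := isCompact_Icc.prod (isCompact_closedBall _ _)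
    have hKsub : K ⊆ Icc (0:ℝ) T ×ˢ univ :=
      prod_mono (Icc_subset_Icc le_rfl hT'T.le) (subset_univ _)
    have hx₁K : (t₁, x₁) ∈ K := by
      refine ⟨ht₁, ?_⟩
      simp only [Metric.mem_closedBall, dist_zero_right]
      linarith
    obtain ⟨⟨t₀, x₀⟩, hp₀K, hmax'⟩ := hKc.exists_isMaxOn ⟨(t₁, x₁), hx₁K⟩ (hψc.mono hKsub)
    have ht₀ : t₀ ∈ Icc (0:ℝ) T' := hp₀K.1
    have hx₀R : ‖x₀‖ ≤ R := by
      have := hp₀K.2; simpa [Metric.mem_closedBall, dist_zero_right] using this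
    have ht₀Icc : t₀ ∈ Icc (0:ℝ) T := ⟨ht₀.1, ht₀.2.trans hT'T.le⟩
    set B : ℝ := ε * Real.exp (lam * t₀) with hB
    have hBpos : 0 < B := by rw [hB]; positivity
    have hmax : ∀ p ∈ K, u p.1 p.2 - G p.1 - ε * Real.exp (lam * p.1) * (1 + Par.qq p.2)
        ≤ u t₀ x₀ - G t₀ - B * (1 + Par.qq x₀) := by
      intro p hp
      have := hmax' hp
      simpa [hB, mul_assoc] using this
    clear hmax' hψc
    have hqx₀ : 0 ≤ Par.qq x₀ := Par.qq_nonneg x₀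
    have hψpos : 0 < u t₀ x₀ - G t₀ - B * (1 + Par.qq x₀) := by
      have h1 : 0 < u t₁ x₁ - G t₁ - ε * Real.exp (lam * t₁) * (1 + Par.qq x₁) := by linarith
      calc (0:ℝ) < u t₁ x₁ - G t₁ - ε * Real.exp (lam * t₁) * (1 + Par.qq x₁) := h1
        _ ≤ _ := hmax (t₁, x₁) hx₁K
    have hexp1 : 1 ≤ Real.exp (lam * t₀) := by
      rw [← Real.exp_zero]
      apply Real.exp_le_exp.2
      have := ht₀.1; positivity
    have hεB : ε ≤ B := by
      rw [hB]; nlinarith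
    have hx₀lt : ‖x₀‖ < R := by
      have h1 : B * (1 + Par.qq x₀) < u t₀ x₀ - G t₀ := by linarith
      have h2 : ε * (1 + Par.qq x₀) ≤ B * (1 + Par.qq x₀) :=
        mul_le_mul_of_nonneg_right hεB (by linarith)
      have h3 : u t₀ x₀ - G t₀ ≤ Mu + MG := by
        have hu1 := hub t₀ ht₀Icc x₀
        have hg1 := abs_le.1 (hMG t₀ ht₀Icc)
        linarith [hg1.1]
      have h4 : ε * (1 + Par.qq x₀) < ε * R ^ 2 := by linarith
      have h5 : Par.qq x₀ < R ^ 2 := by nlinarith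
      rw [Par.qq_eq] at h5
      exact lt_of_pow_lt_pow_left₀ 2 hR0.le h5
    have ht₀pos : 0 < t₀ := by
      rcases eq_or_lt_of_le ht₀.1 with h | h
      · exfalso
        have hBe : B = ε := by rw [hB, ← h, mul_zero, Real.exp_zero, mul_one]
        rw [← h] at hψpos
        rw [hG0, hBe] at hψpos
        have h1 := hinit x₀
        have h2 : 0 < ε * (1 + Par.qq x₀) := mul_pos hε (by linarith)
        linarith
      · exact h
    have ht₀T : t₀ ∈ Ioo (0:ℝ) T := ⟨ht₀pos, lt_of_le_of_lt ht₀.2 hT'T⟩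
    -- time derivative inequality
    have hDer : F t₀ + B * lam * (1 + Par.qq x₀) ≤ deriv (fun s => u s x₀) t₀ := by
      have hu' : DifferentiableAt ℝ (fun s => u s x₀) t₀ := hut x₀ t₀ ht₀T
      have h1 : HasDerivAt (fun s : ℝ => lam * s) lam t₀ := by
        simpa using (hasDerivAt_id t₀).const_mul lam
      have h2 := h1.exp
      have hE : HasDerivAt (fun s => ε * Real.exp (lam * s) * (1 + Par.qq x₀))
          (ε * (Real.exp (lam * t₀) * lam) * (1 + Par.qq x₀)) t₀ :=
        (h2.const_mul ε).mul_const _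
      have hft : HasDerivAt (fun s => u s x₀ - G s - ε * Real.exp (lam * s) * (1 + Par.qq x₀))
          (deriv (fun s => u s x₀) t₀ - F t₀ - ε * (Real.exp (lam * t₀) * lam) * (1 + Par.qq x₀))
          t₀ := (hu'.hasDerivAt.sub (hGd t₀)).sub hE
      have h0 : 0 ≤ deriv (fun s => u s x₀ - G s - ε * Real.exp (lam * s) * (1 + Par.qq x₀)) t₀ := by
        apply deriv_nonneg_of_left_max ht₀pos hft.differentiableAt
        intro s hs
        have hmem : (s, x₀) ∈ K := ⟨⟨hs.1, hs.2.trans ht₀.2⟩, hp₀K.2⟩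
        have := hmax (s, x₀) hmem
        simp only at this ⊢
        rw [hB] at this
        linarith
      rw [hft.deriv] at h0
      rw [hB]
      rw [hB] at hBpos
      nlinarith [h0]
    -- spatial derivatives at the max point
    have hspace : ∀ j, pd (u t₀) j x₀ = B * (2 * x₀ j) ∧
        pd (pd (u t₀) j) j x₀ ≤ 2 * B := by
      intro j
      have hud := (hux t₀ ht₀Icc).1
      have hpdud := (hux t₀ ht₀Icc).2 j
      set v : E n := EuclideanSpace.single j (1:ℝ) with hv
      set L : ℝ → E n := fun s => x₀ + s • v with hL
      have hL0 : L 0 = x₀ := by rw [hL]; simp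
      have hLd : ∀ s, HasDerivAt L v s := fun s => by
        rw [hL]; simpa using ((hasDerivAt_id s).smul_const v).const_add x₀
      have hφd : Differentiable ℝ (fun z => u t₀ z - G t₀ - B * (1 + Par.qq z)) :=
        (hud.sub_const _).sub ((Par.differentiable_qq.const_add 1).const_mul B)
      have hpdφ : ∀ y, pd (fun z => u t₀ z - G t₀ - B * (1 + Par.qq z)) j y
          = pd (u t₀) j y - B * (2 * y j) := by
        intro y
        rw [Par.pd_sub ((hud y).sub_const _) (((Par.differentiable_qq.const_add 1).const_mul B) y),
          Par.pd_sub (hud y) (differentiableAt_const _),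
          Par.pd_const_mul B ((Par.differentiable_qq.const_add 1) y),
          Par.pd_const_add, Par.pd_qq, Par.pd_const]
        ring
      have hgd : ∀ s, HasDerivAt (fun s => u t₀ (L s) - G t₀ - B * (1 + Par.qq (L s)))
          ((fun s => pd (fun z => u t₀ z - G t₀ - B * (1 + Par.qq z)) j (L s)) s) s := by
        intro s
        have h1 := ((hφd (L s)).hasFDerivAt).comp_hasDerivAt s (hLd s)
        simpa [pd, hv, Function.comp_def] using h1
      have hδ : 0 < R - ‖x₀‖ := by linarith [hx₀lt]
      have hgm : ∀ s ∈ Ioo (-(R - ‖x₀‖)) (R - ‖x₀‖),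
          (fun s => u t₀ (L s) - G t₀ - B * (1 + Par.qq (L s))) s
          ≤ (fun s => u t₀ (L s) - G t₀ - B * (1 + Par.qq (L s))) 0 := by
        intro s hs
        have habs : |s| < R - ‖x₀‖ := abs_lt.mpr ⟨hs.1, hs.2⟩
        have hnorm : ‖L s‖ < R := by
          rw [hL]
          calc ‖x₀ + s • v‖ ≤ ‖x₀‖ + ‖s • v‖ := norm_add_le _ _
            _ = ‖x₀‖ + |s| * ‖v‖ := by rw [norm_smul, Real.norm_eq_abs]
            _ = ‖x₀‖ + |s| := by rw [hv, EuclideanSpace.norm_single, norm_one, mul_one]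
            _ < R := by linarith
        have hmem : (t₀, L s) ∈ K := ⟨ht₀, by
          simp only [Metric.mem_closedBall, dist_zero_right]; exact hnorm.le⟩
        have h1 := hmax (t₀, L s) hmem
        simp only at h1
        simp only [hL0]
        rw [hB] at h1 ⊢
        linarith
      have hA : HasDerivAt (fun s => pd (u t₀) j (L s)) (pd (pd (u t₀) j) j x₀) 0 := by
        have h1 := ((hpdud (L 0)).hasFDerivAt).comp_hasDerivAt 0 (hLd 0)
        rw [hL0] at h1
        simpa [pd, hv, Function.comp_def] using h1
      have hB2 : HasDerivAt (fun s => B * (2 * (L s) j)) (B * 2) 0 := by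
        have heq : (fun s : ℝ => B * (2 * (L s) j)) = fun s => (B * 2) * s + B * (2 * x₀ j) := by
          funext s
          rw [hL]
          simp only [PiLp.add_apply, PiLp.smul_apply, hv, EuclideanSpace.single_apply,
            if_pos rfl, if_true, smul_eq_mul, mul_one]
          ring
        rw [heq]
        simpa using ((hasDerivAt_id (0:ℝ)).const_mul (B * 2)).add_const (B * (2 * x₀ j))
      have heq2 : (fun s => pd (fun z => u t₀ z - G t₀ - B * (1 + Par.qq z)) j (L s))
          = fun s => pd (u t₀) j (L s) - B * (2 * (L s) j) := by
        funext s; exact hpdφ (L s)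
      have hg'd0 : HasDerivAt (fun s => pd (fun z => u t₀ z - G t₀ - B * (1 + Par.qq z)) j (L s))
          (pd (pd (u t₀) j) j x₀ - B * 2) 0 := by
        rw [heq2]
        exact hA.sub hB2
      obtain ⟨hz, hd2⟩ := second_deriv_nonpos hδ hgd hgm hg'd0.differentiableAt
      rw [hg'd0.deriv] at hd2
      have hz' : pd (u t₀) j x₀ - B * (2 * x₀ j) = 0 := by
        rw [hL0] at hz
        rw [hpdφ x₀] at hz
        exact hz
      constructor
      · linarith
      · linarith
    -- contradiction
    have hFle := hF x₀ t₀ ht₀T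
    have hS1 : ∑ j, pd (pd (u t₀) j) j x₀ ≤ (n : ℝ) * (2 * B) := by
      calc ∑ j, pd (pd (u t₀) j) j x₀ ≤ ∑ _j : Fin n, 2 * B :=
            Finset.sum_le_sum fun j _ => (hspace j).2
        _ = (n : ℝ) * (2 * B) := by
            rw [Finset.sum_const, Finset.card_univ, Fintype.card_fin, nsmul_eq_mul]
    have hS2 : -((n : ℝ) * (Mb * B * (1 + Par.qq x₀))) ≤ ∑ j, b j t₀ x₀ * pd (u t₀) j x₀ := by
      have h1 : ∀ j : Fin n, -(Mb * B * (1 + Par.qq x₀)) ≤ b j t₀ x₀ * pd (u t₀) j x₀ := by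
        intro j
        rw [(hspace j).1]
        have hbj := abs_le.1 (hb j t₀ ht₀Icc x₀)
        have hxj1 := abs_le.1 (Par.abs_coord_le x₀ j)
        have hA : 0 ≤ (Mb - b j t₀ x₀) * ((1 + Par.qq x₀) / 2 - x₀ j) :=
          mul_nonneg (by linarith [hbj.2]) (by linarith [hxj1.2])
        have hA2 : 0 ≤ (Mb + b j t₀ x₀) * ((1 + Par.qq x₀) / 2 + x₀ j) :=
          mul_nonneg (by linarith [hbj.1]) (by linarith [hxj1.1])
        have hsum : 0 ≤ Mb * (1 + Par.qq x₀) + 2 * (b j t₀ x₀ * x₀ j) := by nlinarith [hA, hA2]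
        nlinarith [mul_nonneg hBpos.le hsum]
      calc -((n : ℝ) * (Mb * B * (1 + Par.qq x₀)))
          = ∑ _j : Fin n, -(Mb * B * (1 + Par.qq x₀)) := by
            rw [Finset.sum_const, Finset.card_univ, Fintype.card_fin, nsmul_eq_mul]; ring
        _ ≤ ∑ j, b j t₀ x₀ * pd (u t₀) j x₀ := Finset.sum_le_sum fun j _ => h1 j
    have hcontr : (0:ℝ) < 0 := by
      have hc3 : ν * ∑ j, pd (pd (u t₀) j) j x₀ ≤ ν * ((n:ℝ) * (2 * B)) :=
        mul_le_mul_of_nonneg_left hS1 hν.le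
      have hc4 : B * lam * (1 + Par.qq x₀)
          ≤ ν * ((n:ℝ) * (2 * B)) + (n:ℝ) * (Mb * B * (1 + Par.qq x₀)) := by
        linarith
      rw [hlam] at hc4
      clear_value B K R
      nlinarith [mul_nonneg (mul_nonneg hν.le hn0) (mul_nonneg hBpos.le hqx₀),
        mul_nonneg hBpos.le hqx₀,
        mul_nonneg (mul_nonneg hMb hn0) (mul_nonneg hBpos.le hqx₀)]
    exact absurd hcontr (lt_irrefl 0)
  -- from key : remove ε, then handle t = T by continuity
  have main1 : ∀ t ∈ Ico (0:ℝ) T, ∀ x : E n, u t x ≤ G t := by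
    intro t ht x
    set T' : ℝ := (t + T) / 2 with hT'
    have hT'0 : 0 < T' := by rw [hT']; linarith [ht.1, ht.2, hT]
    have hT'T : T' < T := by rw [hT']; linarith [ht.2]
    have htT' : t ≤ T' := by rw [hT']; linarith [ht.2]
    by_contra hc
    push_neg at hc
    set d : ℝ := u t x - G t with hd
    have hdpos : 0 < d := by rw [hd]; linarith
    set c : ℝ := Real.exp (lam * t) * (1 + Par.qq x) with hcdef
    have hcpos : 0 < c := by
      have h1 := Par.qq_nonneg x
      have h2 := Real.exp_pos (lam * t)
      rw [hcdef]; nlinarith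
    have := key (d / (2 * c)) (by positivity) T' hT'0 hT'T t ⟨ht.1, htT'⟩ x
    rw [mul_assoc, ← hcdef] at this
    have heq : d / (2 * c) * c = d / 2 := by field_simp
    rw [heq, ← hd] at this
    linarith
  intro t ht x
  rcases eq_or_lt_of_le ht.2 with h | h
  · -- t = T, use continuity
    subst h
    have hone : ContinuousOn (fun s => u s x) (Icc (0:ℝ) t) := by
      have h2 : Continuous (fun s : ℝ => (s, x)) := continuous_id.prodMk continuous_const
      exact huc.comp h2.continuousOn (fun s hs => ⟨hs, mem_univ x⟩)
    have hcont : ContinuousWithinAt (fun s => u s x - G s) (Icc (0:ℝ) t) t :=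
      (hone.sub hGc.continuousOn) t (right_mem_Icc.2 hT.le)
    have hne : (𝓝[Ico (0:ℝ) t] t).NeBot := right_nhdsWithin_Ico_neBot hT
    have htend : Tendsto (fun s => u s x - G s) (𝓝[Ico (0:ℝ) t] t) (𝓝 (u t x - G t)) :=
      hcont.tendsto.mono_left (nhdsWithin_mono _ Ico_subset_Icc_self)
    refine sub_nonpos.1 (le_of_tendsto htend ?_)
    filter_upwards [self_mem_nhdsWithin] with s hs
    have := main1 s hs x
    linarith
  · exact main1 t ⟨ht.1, h⟩ x


set_option maxHeartbeats 1000000 in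
/-- Uniqueness for a linear parabolic system: a bounded classical solution `w` of
`∂wᵢ/∂t − ν Δwᵢ + Σⱼ bⱼ ∂wᵢ/∂xⱼ + Σⱼ c_{ij} wⱼ = 0` on `[0,T]×ℝⁿ` with bounded
continuous coefficients and zero initial data vanishes identically. -/
theorem statement_13 (n : ℕ) (hn : 1 ≤ n) (ν T : ℝ) (hν : 0 < ν) (hT : 0 < T)
    (b : Fin n → ℝ → E n → ℝ) (c : Fin n → Fin n → ℝ → E n → ℝ)
    (hb : ∃ M : ℝ, ∀ j, ∀ t ∈ Icc (0:ℝ) T, ∀ x, |b j t x| ≤ M)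
    (hbc : ∀ j, ContinuousOn (fun p : ℝ × E n => b j p.1 p.2) (Icc (0:ℝ) T ×ˢ univ))
    (hc : ∃ M : ℝ, ∀ i j, ∀ t ∈ Icc (0:ℝ) T, ∀ x, |c i j t x| ≤ M)
    (hcc : ∀ i j, ContinuousOn (fun p : ℝ × E n => c i j p.1 p.2) (Icc (0:ℝ) T ×ˢ univ))
    (w : Fin n → ℝ → E n → ℝ)
    (hwb : ∃ M : ℝ, ∀ i, ∀ t ∈ Icc (0:ℝ) T, ∀ x, |w i t x| ≤ M)
    (hwc : ∀ i, ContinuousOn (fun p : ℝ × E n => w i p.1 p.2) (Icc (0:ℝ) T ×ˢ univ))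
    (hwt : ∀ i x, ∀ t ∈ Ioo (0:ℝ) T, DifferentiableAt ℝ (fun s => w i s x) t)
    (hwx : ∀ i, ∀ t ∈ Icc (0:ℝ) T, Differentiable ℝ (w i t) ∧ ∀ j,
      Differentiable ℝ (pd (w i t) j) ∧ Continuous (pd (w i t) j) ∧
      (∃ M : ℝ, ∀ x, |pd (w i t) j x| ≤ M) ∧
      ∀ k, Continuous (pd (pd (w i t) j) k) ∧ ∃ M : ℝ, ∀ x, |pd (pd (w i t) j) k x| ≤ M)
    (heq : ∀ i x, ∀ t ∈ Ioo (0:ℝ) T,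
      deriv (fun s => w i s x) t - ν * ∑ j, pd (pd (w i t) j) j x
        + ∑ j, b j t x * pd (w i t) j x + ∑ j, c i j t x * w j t x = 0)
    (hinit : ∀ i x, w i 0 x = 0) :
    ∀ i, ∀ t ∈ Icc (0:ℝ) T, ∀ x, w i t x = 0 := by
  obtain ⟨Mb0, hb0⟩ := hb
  obtain ⟨Mc0, hc0⟩ := hc
  obtain ⟨Mw0, hw0⟩ := hwb
  set Mb : ℝ := max Mb0 0 with hMbdef
  set Mc : ℝ := max Mc0 0 with hMcdef
  set Mw : ℝ := max Mw0 0 with hMwdef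
  have hMb : 0 ≤ Mb := le_max_right _ _
  have hMc : 0 ≤ Mc := le_max_right _ _
  have hMw : 0 ≤ Mw := le_max_right _ _
  have hb' : ∀ j, ∀ t ∈ Icc (0:ℝ) T, ∀ x, |b j t x| ≤ Mb :=
    fun j t ht x => (hb0 j t ht x).trans (le_max_left _ _)
  have hc' : ∀ i j, ∀ t ∈ Icc (0:ℝ) T, ∀ x, |c i j t x| ≤ Mc :=
    fun i j t ht x => (hc0 i j t ht x).trans (le_max_left _ _)
  have hw' : ∀ i, ∀ t ∈ Icc (0:ℝ) T, ∀ x, |w i t x| ≤ Mw :=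
    fun i t ht x => (hw0 i t ht x).trans (le_max_left _ _)
  clear hb0 hc0 hw0
  set C : ℝ := (n : ℝ) * Mc with hCdef
  have hC : 0 ≤ C := mul_nonneg (Nat.cast_nonneg n) hMc
  have key : ∀ k : ℕ, ∀ i, ∀ t ∈ Icc (0:ℝ) T, ∀ x,
      |w i t x| ≤ Mw * C ^ k * t ^ k / (Nat.factorial k) := by
    intro k
    induction k with
    | zero =>
      intro i t ht x
      simpa using hw' i t ht x
    | succ k ih =>
      intro i t ht x
      set GG : ℝ → ℝ := fun s => (Mw * C ^ (k+1) / (Nat.factorial (k+1))) * s ^ (k+1) with hGG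
      set FF : ℝ → ℝ := fun s => Mw * C ^ (k+1) * s ^ k / (Nat.factorial k) with hFF
      have hfacpos : (0:ℝ) < (Nat.factorial k : ℝ) := by
        exact_mod_cast Nat.factorial_pos k
      have hfacpos1 : (0:ℝ) < (Nat.factorial (k+1) : ℝ) := by
        exact_mod_cast Nat.factorial_pos (k+1)
      have hGd : ∀ s, HasDerivAt GG (FF s) s := by
        intro s
        have h1 := (hasDerivAt_pow (k+1) s).const_mul (Mw * C ^ (k+1) / (Nat.factorial (k+1)))
        refine h1.congr_deriv ?_
        rw [hFF]
        simp only [Nat.add_sub_cancel, Nat.cast_add, Nat.cast_one]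
        rw [Nat.factorial_succ]
        push_cast
        field_simp
      have hG0 : GG 0 = 0 := by
        rw [hGG]; simp
      have hcw : ∀ x' : E n, ∀ s ∈ Ioo (0:ℝ) T, |∑ j, c i j s x' * w j s x'| ≤ FF s := by
        intro x' s hs
        have hsIcc : s ∈ Icc (0:ℝ) T := ⟨hs.1.le, hs.2.le⟩
        have hs0 : (0:ℝ) ≤ s := hs.1.le
        calc |∑ j, c i j s x' * w j s x'| ≤ ∑ j, |c i j s x' * w j s x'| :=
              Finset.abs_sum_le_sum_abs _ _
          _ ≤ ∑ _j : Fin n, Mc * (Mw * C ^ k * s ^ k / (Nat.factorial k)) := by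
              refine Finset.sum_le_sum fun j _ => ?_
              rw [abs_mul]
              refine mul_le_mul (hc' i j s hsIcc x') (ih j s hsIcc x') (abs_nonneg _) hMc
          _ = (n : ℝ) * (Mc * (Mw * C ^ k * s ^ k / (Nat.factorial k))) := by
              rw [Finset.sum_const, Finset.card_univ, Fintype.card_fin, nsmul_eq_mul]
          _ = FF s := by
              rw [hFF, hCdef]
              field_simp
              ring
      have hup : w i t x ≤ GG t := by
        refine comparison ν T hν hT b Mb hMb hb' (w i) Mw
          (fun t' ht' x' => (abs_le.1 (hw' i t' ht' x')).2) (hwc i) (hwt i)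
          (fun t' ht' => ⟨(hwx i t' ht').1, fun j => ((hwx i t' ht').2 j).1⟩)
          GG FF hG0 hGd ?_ (fun x' => le_of_eq (hinit i x')) t ht x
        intro x' s hs
        have he := heq i x' s hs
        have h2 : -∑ j, c i j s x' * w j s x' ≤ FF s :=
          (neg_le_abs _).trans (hcw x' s hs)
        linarith
      have hdown : -(w i t x) ≤ GG t := by
        refine comparison ν T hν hT b Mb hMb hb' (fun s y => -(w i s y)) Mw
          (fun t' ht' x' => by
            show -(w i t' x') ≤ Mw
            exact neg_le.1 (abs_le.1 (hw' i t' ht' x')).1)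
          ((hwc i).neg) (fun x' s hs => ((hwt i x' s hs).neg))
          ?_ GG FF hG0 hGd ?_ (fun x' => by show -(w i 0 x') ≤ 0; rw [hinit i x']; simp) t ht x
        · intro t' ht'
          have h1 : Differentiable ℝ (fun y => -(w i t' y)) := (hwx i t' ht').1.neg
          refine ⟨h1, fun j => ?_⟩
          have h2 : pd (fun y : E n => -(w i t' y)) j = fun y => -(pd (w i t') j y) :=
            funext fun y => Par.pd_neg
          rw [h2]
          exact ((hwx i t' ht').2 j).1.neg
        · intro x' s hs
          have hsum1 : ∑ j, pd (pd (fun z : E n => -(w i s z)) j) j x'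
              = -∑ j, pd (pd (w i s) j) j x' := by
            rw [← Finset.sum_neg_distrib]
            refine Finset.sum_congr rfl fun j _ => ?_
            have h1 : pd (fun z : E n => -(w i s z)) j = fun y => -(pd (w i s) j y) :=
              funext fun y => Par.pd_neg
            rw [h1, Par.pd_neg]
          have hsum2 : ∑ j, b j s x' * pd (fun z : E n => -(w i s z)) j x'
              = -∑ j, b j s x' * pd (w i s) j x' := by
            rw [← Finset.sum_neg_distrib]
            refine Finset.sum_congr rfl fun j _ => ?_
            rw [Par.pd_neg]
            ring
          have hder : deriv (fun r => -(w i r x')) s = -(deriv (fun r => w i r x') s) :=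
            deriv.neg
          rw [hder, hsum1, hsum2]
          have he := heq i x' s hs
          have h2 : ∑ j, c i j s x' * w j s x' ≤ FF s :=
            (le_abs_self _).trans (hcw x' s hs)
          linarith
      have habs : |w i t x| ≤ GG t := abs_le.mpr ⟨by linarith, hup⟩
      calc |w i t x| ≤ GG t := habs
        _ = Mw * C ^ (k+1) * t ^ (k+1) / (Nat.factorial (k+1)) := by
          rw [hGG]; ring
  intro i t ht x
  have hb2 : ∀ k : ℕ, |w i t x| ≤ Mw * ((C * T) ^ k / (Nat.factorial k)) := by
    intro k
    have h1 := key k i t ht x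
    have hfacpos : (0:ℝ) < (Nat.factorial k : ℝ) := by exact_mod_cast Nat.factorial_pos k
    have h2 : C ^ k * t ^ k ≤ (C * T) ^ k := by
      rw [← mul_pow]
      exact pow_le_pow_left₀ (mul_nonneg hC ht.1) (mul_le_mul_of_nonneg_left ht.2 hC) k
    have h3 : Mw * C ^ k * t ^ k ≤ Mw * (C * T) ^ k := by
      rw [mul_assoc]
      exact mul_le_mul_of_nonneg_left h2 hMw
    calc |w i t x| ≤ Mw * C ^ k * t ^ k / (Nat.factorial k) := h1
      _ ≤ Mw * (C * T) ^ k / (Nat.factorial k) := by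
          have h4 := div_le_div_of_nonneg_right (c := (Nat.factorial k : ℝ)) h3 hfacpos.le
          exact h4
      _ = Mw * ((C * T) ^ k / (Nat.factorial k)) := by ring
  have hlim : Tendsto (fun k : ℕ => Mw * ((C * T) ^ k / (Nat.factorial k))) atTop (𝓝 0) := by
    have h1 := FloorSemiring.tendsto_pow_div_factorial_atTop (C * T)
    simpa using h1.const_mul Mw
  have habs : |w i t x| ≤ 0 := ge_of_tendsto' hlim hb2
  exact abs_eq_zero.1 (le_antisymm habs (abs_nonneg _))
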